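/- arXiv:2207.14490 — 4 statements merged into one kernel-verified Lean document; each statement's English description precedes it below -/
import Mathlib

section
/- Let f : (Fin p → ℝ) → ℝ be a model of the form f(x) = g(x_j) for some g : ℝ → ℝ and fixed j ∈ Fin p, let x^(1), …, x^(n) : Fin p → ℝ (n ≥ 1) be a background dataset, and let x : Fin p → ℝ. Then the interventional SHAP value of feature j at x equals g(x_j) − (1/n) Σ_{i=1}^n g(x^(i)_j). -/
/-- The Shapley value of player `j` for the value function `v`. -/
noncomputable def shapley {p : ℕ} (v : Finset (Fin p) → ℝ) (j : Fin p) : ℝ :=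
  ∑ S ∈ (Finset.univ.erase j).powerset,
    (((S.card.factorial * (p - S.card - 1).factorial : ℕ) : ℝ) / (p.factorial : ℝ)) *
      (v (S ∪ {j}) - v S)

/-- The interventional contribution function of the model `f` at point `x`, with
background dataset `X 1, …, X n`: coordinates in `S` are taken from `x`, the
remaining ones from the background observations. -/
noncomputable def interv {p n : ℕ} (f : (Fin p → ℝ) → ℝ) (X : Fin n → Fin p → ℝ)
    (x : Fin p → ℝ) (S : Finset (Fin p)) : ℝ :=
  (1 / n : ℝ) * ∑ i : Fin n, f (S.piecewise x (X i))

lemma coeff_sum {p : ℕ} (j : Fin p) :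
    ∑ S ∈ (Finset.univ.erase j).powerset,
      (((S.card.factorial * (p - S.card - 1).factorial : ℕ) : ℝ) / (p.factorial : ℝ)) = 1 := by
  have hp : 0 < p := j.pos
  have hcard : (Finset.univ.erase j).card = p - 1 := by
    rw [Finset.card_erase_of_mem (Finset.mem_univ j), Finset.card_univ, Fintype.card_fin]
  rw [Finset.sum_powerset]
  have hstep : ∀ k ∈ Finset.range ((Finset.univ.erase j).card + 1),
      (∑ S ∈ Finset.powersetCard k (Finset.univ.erase j),
        (((S.card.factorial * (p - S.card - 1).factorial : ℕ) : ℝ) / (p.factorial : ℝ)))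
      = (1 : ℝ) / p := by
    intro k hk
    rw [Finset.mem_range, hcard] at hk
    have hk' : k ≤ p - 1 := Nat.lt_succ_iff.mp hk
    rw [Finset.sum_congr rfl (fun S hS => by
      rw [(Finset.mem_powersetCard.mp hS).2])]
    rw [Finset.sum_const, Finset.card_powersetCard, hcard, nsmul_eq_mul]
    have key : ((p-1).choose k) * (Nat.factorial k * Nat.factorial (p - k - 1)) * p
        = Nat.factorial p := by
      have h1 : p - k - 1 = (p - 1) - k := by omega
      rw [h1]
      have h2 : (p-1).choose k * (Nat.factorial k * Nat.factorial (p - 1 - k))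
          = Nat.factorial (p - 1) := by
        rw [← Nat.choose_mul_factorial_mul_factorial hk']
        ring
      rw [h2, mul_comm, Nat.mul_factorial_pred hp.ne']
    have hkey : (((p-1).choose k : ℝ)) * ((Nat.factorial k * Nat.factorial (p - k - 1) : ℕ) : ℝ)
        = (Nat.factorial p : ℝ) / p := by
      have := congrArg (fun m : ℕ => (m : ℝ)) key
      push_cast at this ⊢
      field_simp
      linarith [this]
    have hF : (Nat.factorial p : ℝ) ≠ 0 := by positivity
    have hpr : (p : ℝ) ≠ 0 := by positivity
    rw [← mul_div_assoc, hkey]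
    field_simp
  rw [Finset.sum_congr rfl hstep, Finset.sum_const, Finset.card_range, hcard, nsmul_eq_mul]
  have : ((p - 1 + 1 : ℕ) : ℝ) = (p : ℝ) := by
    congr 1; omega
  rw [this]
  field_simp

/-- if `f x = g (x j)` for some `g : ℝ → ℝ` and fixed `j`, then the
interventional SHAP value of feature `j` at `x` equals
`g (x j) - (1/n) Σ_i g (X i j)`. -/
theorem interventional_shap_univariable {p n : ℕ} (hn : 1 ≤ n)
    (f : (Fin p → ℝ) → ℝ) (g : ℝ → ℝ) (j : Fin p)
    (hf : ∀ x : Fin p → ℝ, f x = g (x j))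
    (X : Fin n → Fin p → ℝ) (x : Fin p → ℝ) :
    shapley (interv f X x) j = g (x j) - (1 / n : ℝ) * ∑ i : Fin n, g (X i j) := by
  have hn0 : (n : ℝ) ≠ 0 := by positivity
  set C : ℝ := g (x j) - (1 / n : ℝ) * ∑ i : Fin n, g (X i j) with hC
  have hterm : ∀ S ∈ (Finset.univ.erase j).powerset,
      interv f X x (S ∪ {j}) - interv f X x S = C := by
    intro S hS
    have hjS : j ∉ S := fun h =>
      (Finset.mem_erase.mp (Finset.mem_powerset.mp hS h)).1 rfl
    have h1 : interv f X x (S ∪ {j}) = g (x j) := by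
      unfold interv
      have : ∀ i : Fin n, f ((S ∪ {j}).piecewise x (X i)) = g (x j) := by
        intro i
        rw [hf, Finset.piecewise_eq_of_mem _ _ _ (by simp)]
      rw [Finset.sum_congr rfl (fun i _ => this i), Finset.sum_const, Finset.card_univ,
        Fintype.card_fin, nsmul_eq_mul]
      field_simp
    have h2 : interv f X x S = (1 / n : ℝ) * ∑ i : Fin n, g (X i j) := by
      unfold interv
      congr 1
      refine Finset.sum_congr rfl fun i _ => ?_
      rw [hf, Finset.piecewise_eq_of_notMem _ _ _ hjS]
    rw [h1, h2, hC]
  unfold shapley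
  rw [Finset.sum_congr rfl (fun S hS => by rw [hterm S hS]), ← Finset.sum_mul, coeff_sum, one_mul]
end

section
/- Equal feature values yield equal SHAP values for additive features: if f : (Fin p → ℝ) → ℝ is additive in coordinate j' and x, y : Fin p → ℝ are two points with x_{j'} = y_{j'}, then the interventional SHAP values of feature j' (with respect to any common background dataset x^(1), …, x^(n) with n ≥ 1) satisfy φ_{j'}(v_x) = φ_{j'}(v_y). -/
/-- `f` does not depend on coordinate `j`: `f x = f y` whenever `x k = y k` for all `k ≠ j`. -/
def NotDependsOn {p : ℕ} (f : (Fin p → ℝ) → ℝ) (j : Fin p) : Prop :=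
  ∀ x y : Fin p → ℝ, (∀ k : Fin p, k ≠ j → x k = y k) → f x = f y

lemma interv_diff {p n : ℕ} (f : (Fin p → ℝ) → ℝ) (g : ℝ → ℝ) (r : (Fin p → ℝ) → ℝ)
    (j' : Fin p) (hr : NotDependsOn r j') (hf : ∀ x : Fin p → ℝ, f x = g (x j') + r x)
    (X : Fin n → Fin p → ℝ) (x : Fin p → ℝ) (S : Finset (Fin p)) (hj : j' ∉ S) :
    interv f X x (S ∪ {j'}) - interv f X x S
      = (1 / n : ℝ) * ∑ i : Fin n, (g (x j') - g (X i j')) := by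
  unfold interv
  rw [← mul_sub, ← Finset.sum_sub_distrib]
  congr 1
  apply Finset.sum_congr rfl
  intro i _
  rw [hf, hf]
  have h1 : ((S ∪ {j'}).piecewise x (X i)) j' = x j' := by
    rw [Finset.piecewise_eq_of_mem]
    simp
  have h2 : (S.piecewise x (X i)) j' = X i j' := by
    rw [Finset.piecewise_eq_of_notMem _ _ _ hj]
  have h3 : r ((S ∪ {j'}).piecewise x (X i)) = r (S.piecewise x (X i)) := by
    apply hr
    intro k hk
    by_cases hkS : k ∈ S
    · rw [Finset.piecewise_eq_of_mem _ _ _ (Finset.mem_union_left _ hkS),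
        Finset.piecewise_eq_of_mem _ _ _ hkS]
    · have : k ∉ S ∪ {j'} := by simp [hkS, hk]
      rw [Finset.piecewise_eq_of_notMem _ _ _ this,
        Finset.piecewise_eq_of_notMem _ _ _ hkS]
  rw [h1, h2, h3]
  ring

/-- if `f` is additive in coordinate `j'` and `x, y` are two points with
`x j' = y j'`, then the interventional SHAP values of feature `j'` (with respect to any
common background dataset of size `n ≥ 1`) coincide: `φ_{j'}(v_x) = φ_{j'}(v_y)`. -/
theorem interventional_shap_congr_of_additive {p n : ℕ} (hn : 1 ≤ n)
    (f : (Fin p → ℝ) → ℝ) (g : ℝ → ℝ) (r : (Fin p → ℝ) → ℝ) (j' : Fin p)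
    (hr : NotDependsOn r j') (hf : ∀ x : Fin p → ℝ, f x = g (x j') + r x)
    (X : Fin n → Fin p → ℝ) (x y : Fin p → ℝ) (hxy : x j' = y j') :
    shapley (interv f X x) j' = shapley (interv f X y) j' := by
  unfold shapley
  apply Finset.sum_congr rfl
  intro S hS
  have hj : j' ∉ S := fun h => (Finset.mem_erase.mp
    (Finset.mem_powerset.mp hS h)).1 rfl
  rw [interv_diff f g r j' hr hf X x S hj, interv_diff f g r j' hr hf X y S hj, hxy]
end

section
/- Monotonicity of SHAP values for monotone additive features: let f : (Fin p → ℝ) → ℝ be additive in coordinate j with additive component g : ℝ → ℝ monotone increasing, and fix a background dataset x^(1), …, x^(n) : Fin p → ℝ (n ≥ 1). Then for any two points x, y : Fin p → ℝ with x_j ≤ y_j, the interventional SHAP values of feature j satisfy φ_j(v_x) ≤ φ_j(v_y). -/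
/-- Monotonicity of SHAP values for monotone additive features: if `f`
is additive in coordinate `j` with monotone increasing additive component `g`, then for
any two points `x, y` with `x j ≤ y j`, the interventional SHAP values (with respect to
a fixed background dataset of size `n ≥ 1`) satisfy `φ_j(v_x) ≤ φ_j(v_y)`. -/
theorem interventional_shap_monotone {p n : ℕ} (hn : 1 ≤ n)
    (f : (Fin p → ℝ) → ℝ) (g : ℝ → ℝ) (r : (Fin p → ℝ) → ℝ) (j : Fin p)
    (hg : Monotone g) (hr : NotDependsOn r j)
    (hf : ∀ x : Fin p → ℝ, f x = g (x j) + r x)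
    (X : Fin n → Fin p → ℝ) (x y : Fin p → ℝ) (hxy : x j ≤ y j) :
    shapley (interv f X x) j ≤ shapley (interv f X y) j := by
  apply Finset.sum_le_sum
  intro S hS
  have hjS : j ∉ S := fun h =>
    Finset.notMem_erase j _ (Finset.mem_powerset.mp hS h)
  have key : ∀ z : Fin p → ℝ, interv f X z (S ∪ {j}) - interv f X z S
      = (1/n : ℝ) * ∑ i : Fin n, (g (z j) - g (X i j)) := by
    intro z
    unfold interv
    rw [← mul_sub, ← Finset.sum_sub_distrib]
    congr 1
    apply Finset.sum_congr rfl
    intro i _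
    rw [hf, hf]
    have h1 : (S ∪ {j}).piecewise z (X i) j = z j := by
      rw [Finset.piecewise_eq_of_mem]; simp
    have h2 : S.piecewise z (X i) j = X i j :=
      Finset.piecewise_eq_of_notMem _ _ _ hjS
    have h3 : r ((S ∪ {j}).piecewise z (X i)) = r (S.piecewise z (X i)) := by
      apply hr
      intro k hk
      by_cases hkS : k ∈ S
      · rw [Finset.piecewise_eq_of_mem, Finset.piecewise_eq_of_mem] <;> simp [hkS]
      · rw [Finset.piecewise_eq_of_notMem, Finset.piecewise_eq_of_notMem] <;> simp [hkS, hk]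
    rw [h1, h2, h3]; ring
  rw [key, key]
  apply mul_le_mul_of_nonneg_left _ (by positivity)
  apply mul_le_mul_of_nonneg_left _ (by positivity)
  apply Finset.sum_le_sum
  intro i _
  exact sub_le_sub_right (hg hxy) _
end

section
/- Case-weighted version of Proposition 1: let f : (Fin p → ℝ) → ℝ be additive in coordinate j', let x^(1), …, x^(n) : Fin p → ℝ be a background dataset with positive case weights w_1, …, w_n > 0, define the weighted partial dependence PD_{j'}^w(t) = (Σ_i w_i f(Function.update x^(i) j' t))/(Σ_i w_i) and the weighted interventional contribution function v_x^w(S) = (Σ_i w_i f(S.piecewise x x^(i)))/(Σ_i w_i). Then there exists c ∈ ℝ such that for every point x : Fin p → ℝ, the Shapley value φ_{j'}(v_x^w) equals PD_{j'}^w(x_{j'}) + c. -/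
/-- The case-weighted empirical partial dependence function of feature `j` for the
model `f` with background dataset `X 1, …, X n` and case weights `w`. -/
noncomputable def wpdep {p n : ℕ} (f : (Fin p → ℝ) → ℝ) (X : Fin n → Fin p → ℝ)
    (w : Fin n → ℝ) (j : Fin p) (t : ℝ) : ℝ :=
  (∑ i : Fin n, w i * f (Function.update (X i) j t)) / (∑ i : Fin n, w i)

/-- The case-weighted interventional contribution function of the model `f` at point
`x`, with background dataset `X 1, …, X n` and case weights `w`. -/
noncomputable def winterv {p n : ℕ} (f : (Fin p → ℝ) → ℝ) (X : Fin n → Fin p → ℝ)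
    (w : Fin n → ℝ) (x : Fin p → ℝ) (S : Finset (Fin p)) : ℝ :=
  (∑ i : Fin n, w i * f (S.piecewise x (X i))) / (∑ i : Fin n, w i)

/-- Case-weighted version of Proposition 1: if `f` is additive in
coordinate `j'`, and `X` is a background dataset of size `n ≥ 1` with positive case
weights `w`, then there exists `c ∈ ℝ` such that for every point `x`, the Shapley
value of the weighted interventional contribution function equals
the weighted partial dependence `PD_{j'}^w (x j') + c`. -/
theorem weighted_interventional_shap_eq_wpdep_of_additive {p n : ℕ} (hn : 1 ≤ n)
    (f : (Fin p → ℝ) → ℝ) (g : ℝ → ℝ) (r : (Fin p → ℝ) → ℝ) (j' : Fin p)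
    (hr : NotDependsOn r j') (hf : ∀ x : Fin p → ℝ, f x = g (x j') + r x)
    (X : Fin n → Fin p → ℝ) (w : Fin n → ℝ) (hw : ∀ i : Fin n, 0 < w i) :
    ∃ c : ℝ, ∀ x : Fin p → ℝ,
      shapley (winterv f X w x) j' = wpdep f X w j' (x j') + c := by
  have hne : Nonempty (Fin n) := ⟨⟨0, hn⟩⟩
  set W : ℝ := ∑ i : Fin n, w i with hW
  have hWpos : 0 < W := Finset.sum_pos (fun i _ => hw i) Finset.univ_nonempty
  refine ⟨-(∑ i : Fin n, w i * g (X i j')) / W - (∑ i : Fin n, w i * r (X i)) / W, fun x => ?_⟩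
  -- difference is constant
  have hdiff : ∀ S ∈ (Finset.univ.erase j').powerset,
      winterv f X w x (S ∪ {j'}) - winterv f X w x S
        = g (x j') - (∑ i : Fin n, w i * g (X i j')) / W := by
    intro S hS
    have hjS : j' ∉ S := fun h => (Finset.mem_erase.mp (Finset.mem_powerset.mp hS h)).1 rfl
    unfold winterv
    rw [div_sub_div_same, ← Finset.sum_sub_distrib]
    have : ∀ i : Fin n,
        w i * f ((S ∪ {j'}).piecewise x (X i)) - w i * f (S.piecewise x (X i))
          = w i * (g (x j') - g (X i j')) := by
      intro i
      have hrc : r ((S ∪ {j'}).piecewise x (X i)) = r (S.piecewise x (X i)) := by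
        apply hr
        intro k hk
        by_cases hkS : k ∈ S
        · rw [Finset.piecewise_eq_of_mem _ _ _ (Finset.mem_union_left _ hkS),
            Finset.piecewise_eq_of_mem _ _ _ hkS]
        · rw [Finset.piecewise_eq_of_notMem _ _ _ (by simp [hkS, hk]),
            Finset.piecewise_eq_of_notMem _ _ _ hkS]
      have hj1 : (S ∪ {j'}).piecewise x (X i) j' = x j' :=
        Finset.piecewise_eq_of_mem _ _ _ (by simp)
      have hj2 : S.piecewise x (X i) j' = X i j' :=
        Finset.piecewise_eq_of_notMem _ _ _ hjS
      rw [hf, hf, hj1, hj2, hrc]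
      ring
    rw [Finset.sum_congr rfl (fun i _ => this i)]
    have : (∑ i : Fin n, w i * (g (x j') - g (X i j')))
        = g (x j') * W - ∑ i : Fin n, w i * g (X i j') := by
      rw [hW, Finset.mul_sum, ← Finset.sum_sub_distrib]
      congr 1; ext i; ring
    rw [this, sub_div, mul_div_assoc, div_self hWpos.ne', mul_one]
  have hshap : shapley (winterv f X w x) j'
      = g (x j') - (∑ i : Fin n, w i * g (X i j')) / W := by
    unfold shapley
    rw [Finset.sum_congr rfl (fun S hS => by rw [hdiff S hS]), ← Finset.sum_mul, coeff_sum, one_mul]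
  have hpd : wpdep f X w j' (x j')
      = g (x j') + (∑ i : Fin n, w i * r (X i)) / W := by
    unfold wpdep
    have : ∀ i : Fin n, w i * f (Function.update (X i) j' (x j'))
        = w i * (g (x j') + r (X i)) := by
      intro i
      rw [hf, Function.update_self]
      congr 2
      exact hr _ _ (fun k hk => Function.update_of_ne hk _ _)
    rw [Finset.sum_congr rfl (fun i _ => this i)]
    have : (∑ i : Fin n, w i * (g (x j') + r (X i)))
        = g (x j') * W + ∑ i : Fin n, w i * r (X i) := by
      rw [hW, Finset.mul_sum, ← Finset.sum_add_distrib]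
      congr 1; ext i; ring
    rw [this, add_div, mul_div_assoc, div_self hWpos.ne', mul_one]
  rw [hshap, hpd]
  ring
end
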